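/- If f is holomorphic on ℂ \ {0} and satisfies e^{-iα} f(z) = f(e^{iα} z) for all z ≠ 0 and all α ∈ (0, π), then there exists a complex constant c such that f(z) = c / z for all z ≠ 0. -/

import Mathlib

open Complex

theorem rotationally_invariant_field_is_c_div_z
    (f : ℂ → ℂ)
    (hf : ∀ z : ℂ, z ≠ 0 → DifferentiableAt ℂ f z)
    (hrot : ∀ α : ℝ, 0 < α → α < Real.pi →
      ∀ z : ℂ, z ≠ 0 → Complex.exp (-(I * α)) * f z = f (Complex.exp (I * α) * z)) :
    ∃ c : ℂ, ∀ z : ℂ, z ≠ 0 → f z = c / z := by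
  set g : ℂ → ℂ := fun z => z * f z with hg
  -- invariance of g
  have hginv : ∀ α : ℝ, 0 < α → α < Real.pi → ∀ z : ℂ, z ≠ 0 →
      g (Complex.exp (I * α) * z) = g z := by
    intro α h1 h2 z hz
    have h := hrot α h1 h2 z hz
    have hexp : Complex.exp (I * α) * Complex.exp (-(I * α)) = 1 := by
      rw [← Complex.exp_add]; simp
    calc g (Complex.exp (I * α) * z)
        = Complex.exp (I * α) * z * f (Complex.exp (I * α) * z) := rfl
      _ = Complex.exp (I * α) * z * (Complex.exp (-(I * α)) * f z) := by rw [h]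
      _ = (Complex.exp (I * α) * Complex.exp (-(I * α))) * (z * f z) := by ring
      _ = g z := by rw [hexp]; simp [hg]
  have hU : IsOpen ({0}ᶜ : Set ℂ) := isOpen_compl_singleton
  have hgan : AnalyticOnNhd ℂ g ({0}ᶜ : Set ℂ) := by
    apply DifferentiableOn.analyticOnNhd _ hU
    intro z hz
    exact (differentiableAt_id.mul (hf z hz)).differentiableWithinAt
  have hconn : IsPreconnected ({0}ᶜ : Set ℂ) :=
    (isConnected_compl_singleton_of_one_lt_rank
      (rank_real_complex ▸ Nat.one_lt_ofNat) _).isPreconnected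
  -- frequently equal near 1
  have hfreq : ∃ᶠ z in nhdsWithin (1 : ℂ) {(1:ℂ)}ᶜ, g z = g 1 := by
    set u : ℕ → ℂ := fun n => Complex.exp (I * ((1 / (n + 1) : ℝ) : ℂ)) with hu
    have hpos : ∀ n : ℕ, (0 : ℝ) < 1 / (n + 1) := by
      intro n; positivity
    have hlt : ∀ n : ℕ, (1 / (n + 1) : ℝ) < Real.pi := by
      intro n
      have h1 : (1 / (n + 1) : ℝ) ≤ 1 := by
        rw [div_le_one (by positivity)]; linarith [Nat.cast_nonneg (α := ℝ) n]
      linarith [Real.pi_gt_three]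
    have hval : ∀ n : ℕ, g (u n) = g 1 := by
      intro n
      have := hginv (1 / (n + 1)) (hpos n) (hlt n) 1 one_ne_zero
      simpa [hu] using this
    have hne : ∀ n : ℕ, u n ≠ 1 := by
      intro n h
      have him := Complex.exp_ofReal_mul_I_im (1 / (n + 1) : ℝ)
      rw [mul_comm] at him
      have him2 : (u n).im = Real.sin (1 / (n + 1)) := him
      rw [h] at him2
      have hsin : Real.sin (1 / (n + 1)) > 0 :=
        Real.sin_pos_of_pos_of_lt_pi (hpos n) (hlt n)
      rw [Complex.one_im] at him2
      linarith
    have htend : Filter.Tendsto u Filter.atTop (nhds (1 : ℂ)) := by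
      have h0 : Filter.Tendsto (fun n : ℕ => (1 / (n + 1) : ℝ)) Filter.atTop (nhds 0) :=
        tendsto_one_div_add_atTop_nhds_zero_nat
      have h1 : Filter.Tendsto (fun n : ℕ => ((1 / (n + 1) : ℝ) : ℂ)) Filter.atTop (nhds 0) := by
        simpa [Function.comp_def] using (Complex.continuous_ofReal.tendsto 0).comp h0
      have h2 : Filter.Tendsto (fun n : ℕ => I * ((1 / (n + 1) : ℝ) : ℂ)) Filter.atTop
          (nhds 0) := by
        simpa using h1.const_mul I
      have h3 := (Complex.continuous_exp.tendsto 0).comp h2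
      rw [Complex.exp_zero] at h3
      exact h3
    have htend' : Filter.Tendsto u Filter.atTop (nhdsWithin (1 : ℂ) {(1:ℂ)}ᶜ) := by
      apply tendsto_nhdsWithin_of_tendsto_nhds_of_eventually_within _ htend
      exact Filter.Eventually.of_forall fun n => hne n
    exact htend'.frequently (Filter.Frequently.of_forall hval)
  have heq : Set.EqOn g (fun _ => g 1) ({0}ᶜ : Set ℂ) := by
    apply hgan.eqOn_of_preconnected_of_frequently_eq analyticOnNhd_const hconn
      (by simp : (1:ℂ) ∈ ({0}ᶜ : Set ℂ))
    simpa using hfreq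
  refine ⟨g 1, fun z hz => ?_⟩
  have hz' : g z = g 1 := heq (by simpa using hz)
  have : z * f z = g 1 := hz'
  field_simp [← this]
  linear_combination this
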